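/- arXiv:1406.3850 — 3 statements merged into one kernel-verified Lean document; each statement's English description precedes it below -/
import Mathlib

section
/- Let N ≥ 2. There is a constant C(N) > 0 such that for all 0 < σ ≤ ρ and every set E ⊂ ℝ^{N+1}: PH_ρ^N(E) ≤ PH_σ^N(E) ≤ C(N) (ρ/σ)² PH_ρ^N(E). -/
open MeasureTheory Metric Set
open scoped ENNReal NNReal

noncomputable section

/-- Points of `ℝ^{N+1}` are written `(x, t)` with `x ∈ ℝ^N` and `t ∈ ℝ`. -/
abbrev PSpace (N : ℕ) := EuclideanSpace ℝ (Fin N) × ℝ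

/-- The parabolic cylinder `Q_δ(x,t) = B_δ(x) × (t - δ², t]`. -/
def pQ (N : ℕ) (δ : ℝ) (z : PSpace N) : Set (PSpace N) :=
  ball z.1 δ ×ˢ Ioc (z.2 - δ ^ 2) z.2

/-- The parabolic cylinder `Q̃_r(x,t) = B_r(x) × (t - r², t + r²)`. -/
def pQt (N : ℕ) (r : ℝ) (z : PSpace N) : Set (PSpace N) :=
  ball z.1 r ×ˢ Ioo (z.2 - r ^ 2) (z.2 + r ^ 2)

/-- The parabolic boundary of an open set `O ⊆ ℝ^{N+1}`: points of the topological
boundary such that every downward cylinder `Q_δ` meets the complement of `O`. -/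
def pBoundary (N : ℕ) (O : Set (PSpace N)) : Set (PSpace N) :=
  {z ∈ frontier O | ∀ δ > 0, (pQ N δ z ∩ Oᶜ).Nonempty}

/-- Partial derivative in time. -/
def tDeriv {N : ℕ} (u : PSpace N → ℝ) (z : PSpace N) : ℝ :=
  deriv (fun s => u (z.1, s)) z.2

/-- Partial derivative in the `i`-th spatial direction. -/
def xDeriv {N : ℕ} (i : Fin N) (u : PSpace N → ℝ) (z : PSpace N) : ℝ :=
  lineDeriv ℝ (fun y => u (y, z.2)) z.1 (EuclideanSpace.single i 1)

/-- Second spatial partial derivative. -/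
def xxDeriv {N : ℕ} (i j : Fin N) (u : PSpace N → ℝ) (z : PSpace N) : ℝ :=
  xDeriv i (xDeriv j u) z

/-- Spatial Laplacian. -/
def lapl {N : ℕ} (u : PSpace N → ℝ) (z : PSpace N) : ℝ :=
  ∑ i : Fin N, xxDeriv i i u z

/-- Euclidean norm of the spatial gradient. -/
def gradNorm {N : ℕ} (u : PSpace N → ℝ) (z : PSpace N) : ℝ :=
  Real.sqrt (∑ i : Fin N, (xDeriv i u z) ^ 2)

/-- `u ∈ C^{2,1}(O)` : `u`, its first and second spatial derivatives and its time
derivative exist and are continuous in `O`. -/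
structure IsC21 {N : ℕ} (O : Set (PSpace N)) (u : PSpace N → ℝ) : Prop where
  cont : ContinuousOn u O
  diff_t : ∀ z ∈ O, DifferentiableAt ℝ (fun s => u (z.1, s)) z.2
  cont_t : ContinuousOn (tDeriv u) O
  diff_x : ∀ (i : Fin N), ∀ z ∈ O,
    LineDifferentiableAt ℝ (fun y => u (y, z.2)) z.1 (EuclideanSpace.single i 1)
  cont_x : ∀ i : Fin N, ContinuousOn (xDeriv i u) O
  diff_xx : ∀ (i j : Fin N), ∀ z ∈ O,
    LineDifferentiableAt ℝ (fun y => xDeriv j u (y, z.2)) z.1 (EuclideanSpace.single i 1)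
  cont_xx : ∀ i j : Fin N, ContinuousOn (xxDeriv i j u) O

/-- The blow-up condition `lim_{δ→0} inf_{O ∩ Q_δ(z)} u = ∞` at every point of the
parabolic boundary. -/
def BlowsUp {N : ℕ} (O : Set (PSpace N)) (u : PSpace N → ℝ) : Prop :=
  ∀ z ∈ pBoundary N O, ∀ M : ℝ, ∃ δ > (0 : ℝ), ∀ w ∈ O ∩ pQ N δ z, M ≤ u w

/-- A large solution of `∂_t u - Δu + f(u) = 0` in `O`. -/
def IsLargeSolution {N : ℕ} (O : Set (PSpace N)) (f : ℝ → ℝ) (u : PSpace N → ℝ) : Prop :=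
  IsC21 O u ∧ (∀ z ∈ O, tDeriv u z - lapl u z + f (u z) = 0) ∧ BlowsUp O u

/-- The parabolic Sobolev norm `‖φ‖_{W^{2,1}_p(ℝ^{N+1})}`. -/
def W21Norm (N : ℕ) (p : ℝ) (φ : PSpace N → ℝ) : ℝ :=
  (eLpNorm φ (ENNReal.ofReal p) volume).toReal
    + (eLpNorm (tDeriv φ) (ENNReal.ofReal p) volume).toReal
    + (eLpNorm (gradNorm φ) (ENNReal.ofReal p) volume).toReal
    + ∑ i : Fin N, ∑ j : Fin N, (eLpNorm (xxDeriv i j φ) (ENNReal.ofReal p) volume).toReal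

/-- The capacity `Cap_{2,1,p}` of a compact set `K ⊆ ℝ^{N+1}`. -/
def cap21c (N : ℕ) (p : ℝ) (K : Set (PSpace N)) : ℝ :=
  sInf { c | ∃ φ : SchwartzMap (PSpace N) ℝ,
    (∃ U, IsOpen U ∧ K ⊆ U ∧ ∀ z ∈ U, 1 ≤ φ z) ∧ c = W21Norm N p (fun z => φ z) ^ p }

/-- The capacity `Cap_{2,1,p}` of an arbitrary (Suslin) set. -/
def cap21 (N : ℕ) (p : ℝ) (E : Set (PSpace N)) : ℝ :=
  sSup { c | ∃ D, D ⊆ E ∧ IsCompact D ∧ c = cap21c N p D }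

/-- The parabolic Hausdorff capacity `PH_ρ^N(E)`. -/
def PHcap (N : ℕ) (ρ : ℝ) (E : Set (PSpace N)) : ℝ≥0∞ :=
  ⨅ (c : ℕ → PSpace N × ℝ)
    (_ : (∀ j, 0 ≤ (c j).2 ∧ (c j).2 ≤ ρ) ∧ E ⊆ ⋃ j, pQt N (c j).2 (c j).1),
    ∑' j, ENNReal.ofReal ((c j).2 ^ N)

/-- The truncated Riesz parabolic potential `I_2^R[μ]`. -/
def riesz (N : ℕ) (R : ℝ) (μ : Measure (PSpace N)) (z : PSpace N) : ℝ≥0∞ :=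
  ∫⁻ ρ in Ioo (0 : ℝ) R, μ (pQt N ρ z) / ENNReal.ofReal (ρ ^ (N + 1))

/-- The truncated fractional maximal parabolic potential `M_2^R[μ]`. -/
def maxPot (N : ℕ) (R : ℝ) (μ : Measure (PSpace N)) (z : PSpace N) : ℝ≥0∞ :=
  ⨆ (ρ : ℝ) (_ : ρ ∈ Ioo (0 : ℝ) R), μ (pQt N ρ z) / ENNReal.ofReal (ρ ^ N)

/-- The Gaussian heat kernel on `ℝ^{N+1}`. -/
def heatK (N : ℕ) (z : PSpace N) : ℝ :=
  if 0 < z.2 then (4 * Real.pi * z.2) ^ (-(N : ℝ) / 2) * Real.exp (-‖z.1‖ ^ 2 / (4 * z.2))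
  else 0

/-- The heat potential `(ℍ * μ)(x,t)` of a nonnegative measure. -/
def heatPot (N : ℕ) (μ : Measure (PSpace N)) (z : PSpace N) : ℝ≥0∞ :=
  ∫⁻ w, ENNReal.ofReal (heatK N (z.1 - w.1, z.2 - w.2)) ∂μ

/-- Exponential on `ℝ≥0∞`. -/
def expE (x : ℝ≥0∞) : ℝ≥0∞ := if x = ⊤ then ⊤ else ENNReal.ofReal (Real.exp x.toReal)

/-- Parabolic distance from a point to a set (taken over points at earlier times). -/
def pDist (N : ℕ) (z : PSpace N) (S : Set (PSpace N)) : ℝ :=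
  sInf { r | ∃ w ∈ S, w.2 ≤ z.2 ∧ r = max (dist z.1 w.1) (Real.sqrt (z.2 - w.2)) }

end
lemma ball_cover (N : ℕ) (x : EuclideanSpace ℝ (Fin N)) {r σ : ℝ}
    (hσ : 0 < σ) (hσr : σ ≤ r) :
    ∃ s : Finset (EuclideanSpace ℝ (Fin N)),
      (s.card : ℝ) ≤ (4 * r / σ) ^ N ∧ ball x r ⊆ ⋃ y ∈ s, ball y σ := by
  classical
  have hr : 0 < r := hσ.trans_le hσr
  have hfin : Module.finrank ℝ (EuclideanSpace ℝ (Fin N)) = N := finrank_euclideanSpace_fin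
  set μ : Measure (EuclideanSpace ℝ (Fin N)) := volume with hμ
  have hball0 : (0 : ℝ≥0∞) < μ (ball 0 1) := measure_ball_pos μ 0 one_pos
  have hballtop : μ (ball (0 : EuclideanSpace ℝ (Fin N)) 1) ≠ ∞ := measure_ball_lt_top.ne
  set P : Finset (EuclideanSpace ℝ (Fin N)) → Prop := fun s =>
    (↑s : Set (EuclideanSpace ℝ (Fin N))) ⊆ closedBall x r ∧
      (↑s : Set (EuclideanSpace ℝ (Fin N))).Pairwise fun a b => σ ≤ dist a b with hP
  have hcard : ∀ s, P s → (s.card : ℝ) ≤ (4 * r / σ) ^ N := by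
    intro s hs
    have hdisj : (↑s : Set (EuclideanSpace ℝ (Fin N))).PairwiseDisjoint
        fun y => ball y (σ / 2) := by
      intro a ha b hb hab
      exact ball_disjoint_ball (by linarith [hs.2 ha hb hab])
    have hmeas : μ (⋃ y ∈ s, ball y (σ / 2)) = ∑ y ∈ s, μ (ball y (σ / 2)) :=
      measure_biUnion_finset hdisj fun y _ => measurableSet_ball
    have hsub : (⋃ y ∈ s, ball y (σ / 2)) ⊆ closedBall x (r + σ / 2) := by
      refine iUnion₂_subset fun y hy => ?_
      refine (ball_subset_closedBall.trans (closedBall_subset_closedBall' ?_))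
      have := hs.1 hy
      simp only [mem_closedBall] at this
      linarith
    have hsum : ∑ y ∈ s, μ (ball y (σ / 2))
        = (s.card : ℝ≥0∞) * (ENNReal.ofReal ((σ/2) ^ N) * μ (ball 0 1)) := by
      rw [Finset.sum_congr rfl fun y _ => by
        rw [Measure.addHaar_ball_of_pos μ y (by linarith : (0:ℝ) < σ/2), hfin]]
      rw [Finset.sum_const, nsmul_eq_mul]
    have h1 : (s.card : ℝ≥0∞) * (ENNReal.ofReal ((σ/2) ^ N) * μ (ball 0 1))
        ≤ ENNReal.ofReal ((r + σ/2) ^ N) * μ (ball 0 1) := by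
      rw [← hsum, ← hmeas]
      calc μ (⋃ y ∈ s, ball y (σ / 2)) ≤ μ (closedBall x (r + σ / 2)) := measure_mono hsub
        _ = ENNReal.ofReal ((r + σ/2) ^ N) * μ (ball 0 1) := by
            rw [Measure.addHaar_closedBall μ x (by linarith : (0:ℝ) ≤ r + σ/2), hfin]
    have h2 : (s.card : ℝ≥0∞) * ENNReal.ofReal ((σ/2) ^ N)
        ≤ ENNReal.ofReal ((r + σ/2) ^ N) := by
      rw [← ENNReal.mul_le_mul_iff_left hball0.ne' hballtop]
      calc (s.card : ℝ≥0∞) * ENNReal.ofReal ((σ/2) ^ N) * μ (ball 0 1)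
          = (s.card : ℝ≥0∞) * (ENNReal.ofReal ((σ/2) ^ N) * μ (ball 0 1)) := by ring
        _ ≤ _ := h1
    have h3 : (s.card : ℝ) * (σ/2) ^ N ≤ (r + σ/2) ^ N := by
      rw [show ((s.card : ℝ≥0∞)) = ENNReal.ofReal (s.card : ℝ) by simp,
        ← ENNReal.ofReal_mul (by positivity)] at h2
      exact (ENNReal.ofReal_le_ofReal_iff (by positivity)).mp h2
    have h4 : (r + σ/2) ^ N ≤ ((4 * r / σ) * (σ/2)) ^ N := by
      apply pow_le_pow_left₀ (by linarith)
      have : (4 * r / σ) * (σ/2) = 2 * r := by field_simp; ring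
      linarith
    have h5 : ((4 * r / σ) * (σ/2)) ^ N = (4 * r / σ) ^ N * (σ/2) ^ N := mul_pow _ _ _
    have hpow : (0:ℝ) < (σ/2) ^ N := by positivity
    nlinarith [h3, h4]
  set M : ℕ := ⌊(4 * r / σ) ^ N⌋₊ with hM
  set T : Set ℕ := {n | ∃ s, P s ∧ s.card = n} with hT
  have h0T : 0 ∈ T := ⟨∅, ⟨by simp, by simp⟩, rfl⟩
  have hbdd : ∀ n ∈ T, n ≤ M := by
    rintro n ⟨s, hs, rfl⟩
    exact Nat.le_floor (hcard s hs)
  have hSupMem : sSup T ∈ T := Nat.sSup_mem ⟨0, h0T⟩ ⟨M, hbdd⟩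
  obtain ⟨s, hs, hcards⟩ := hSupMem
  refine ⟨s, hcard s hs, ?_⟩
  intro z hz
  by_contra hzn
  have hzsep : ∀ y ∈ s, σ ≤ dist z y := by
    intro y hy
    by_contra hlt
    exact hzn (mem_biUnion hy (by simpa [mem_ball] using not_le.mp hlt))
  have hzs : z ∉ s := by
    intro hzs
    exact absurd (hzsep z hzs) (by simp [hσ.not_ge])
  have hPins : P (insert z s) := by
    constructor
    · rw [Finset.coe_insert]
      exact insert_subset (ball_subset_closedBall hz) hs.1
    · rw [Finset.coe_insert]
      haveI : Std.Symm (fun a b : EuclideanSpace ℝ (Fin N) => σ ≤ dist a b) :=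
        ⟨fun a b h => by rwa [dist_comm]⟩
      rw [pairwise_insert_of_symmetric]
      exact ⟨hs.2, fun b hb _ => hzsep b hb⟩
  have hmem : s.card + 1 ∈ T := ⟨insert z s, hPins, Finset.card_insert_of_notMem hzs⟩
  have hle := le_csSup ⟨M, hbdd⟩ hmem
  omega

lemma ioo_cover {r σ : ℝ} (t : ℝ) (hσ : 0 < σ) (hσr : σ ≤ r) :
    ∃ K : ℕ, (K : ℝ) ≤ 3 * r ^ 2 / σ ^ 2 ∧
      Ioo (t - r ^ 2) (t + r ^ 2) ⊆ ⋃ k ∈ Finset.range K,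
        Ioo ((t - r ^ 2 + σ ^ 2 * k) - σ ^ 2) ((t - r ^ 2 + σ ^ 2 * k) + σ ^ 2) := by
  have hσ2 : (0:ℝ) < σ ^ 2 := by positivity
  have hr : 0 < r := hσ.trans_le hσr
  have hr2 : σ ^ 2 ≤ r ^ 2 := by nlinarith
  refine ⟨⌈2 * r ^ 2 / σ ^ 2⌉₊, ?_, ?_⟩
  · have h1 : (⌈2 * r ^ 2 / σ ^ 2⌉₊ : ℝ) < 2 * r ^ 2 / σ ^ 2 + 1 :=
      Nat.ceil_lt_add_one (by positivity)
    have h2 : (1:ℝ) ≤ r ^ 2 / σ ^ 2 := (one_le_div hσ2).mpr hr2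
    have : 3 * r ^ 2 / σ ^ 2 = 2 * r ^ 2 / σ ^ 2 + r ^ 2 / σ ^ 2 := by ring
    linarith
  · intro s hs
    obtain ⟨hs1, hs2⟩ := hs
    set k : ℕ := ⌊(s - (t - r ^ 2)) / σ ^ 2⌋₊ with hk
    have hpos : 0 ≤ (s - (t - r ^ 2)) / σ ^ 2 :=
      div_nonneg (by linarith) hσ2.le
    have hkK : k < ⌈2 * r ^ 2 / σ ^ 2⌉₊ := by
      have hlt : (s - (t - r ^ 2)) / σ ^ 2 < 2 * r ^ 2 / σ ^ 2 := by
        gcongr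
        linarith
      exact (Nat.floor_lt hpos).mpr (hlt.trans_le (Nat.le_ceil _))
    refine mem_biUnion (Finset.mem_range.mpr hkK) ?_
    have hfl : (k : ℝ) ≤ (s - (t - r ^ 2)) / σ ^ 2 := Nat.floor_le hpos
    have hfl2 : (s - (t - r ^ 2)) / σ ^ 2 < k + 1 := Nat.lt_floor_add_one _
    have e1 : σ ^ 2 * (k:ℝ) ≤ s - (t - r ^ 2) := by
      rw [mul_comm]; exact (le_div_iff₀ hσ2).mp hfl
    have e2 : s - (t - r ^ 2) < σ ^ 2 * ((k:ℝ) + 1) := by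
      rw [mul_comm]; exact (div_lt_iff₀ hσ2).mp hfl2
    constructor <;> [skip; skip] <;> nlinarith

lemma cyl_cover (N : ℕ) (hN : 0 < N) (z : PSpace N) {r σ : ℝ}
    (hσ : 0 < σ) (hσr : σ ≤ r) :
    ∃ f : ℕ → PSpace N × ℝ, (∀ j, 0 ≤ (f j).2 ∧ (f j).2 ≤ σ) ∧
      pQt N r z ⊆ ⋃ j, pQt N (f j).2 (f j).1 ∧
      ∑' j, ENNReal.ofReal ((f j).2 ^ N) ≤ ENNReal.ofReal (3 * 4 ^ N * (r / σ) ^ 2 * r ^ N) := by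
  classical
  have hr : 0 < r := hσ.trans_le hσr
  obtain ⟨s, hscard, hscov⟩ := ball_cover N z.1 hσ hσr
  obtain ⟨K, hK, hKcov⟩ := ioo_cover z.2 hσ hσr
  set L : List (PSpace N × ℝ) :=
    (s.toList ×ˢ List.range K).map
      (fun p => ((p.1, z.2 - r ^ 2 + σ ^ 2 * p.2), σ)) with hL
  have hLlen : L.length = s.card * K := by
    simp [hL, List.length_product, Finset.length_toList]
  have hLrad : ∀ p ∈ L, p.2 = σ := by
    intro p hp
    simp only [hL, List.mem_map] at hp
    obtain ⟨q, -, rfl⟩ := hp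
    rfl
  set f : ℕ → PSpace N × ℝ := fun j => L.getD j ((z.1, z.2), 0) with hf
  have hfcases : ∀ j, f j ∈ L ∨ (f j).2 = 0 := by
    intro j
    by_cases h : j < L.length
    · left
      rw [hf]
      simp only [List.getD_eq_getElem _ _ h]
      exact List.getElem_mem h
    · right
      rw [hf]
      simp only [List.getD_eq_default _ _ (le_of_not_gt h)]
  refine ⟨f, ?_, ?_, ?_⟩
  · intro j
    rcases hfcases j with h | h
    · rw [hLrad _ h]; exact ⟨hσ.le, le_refl σ⟩
    · rw [h]; exact ⟨le_refl 0, hσ.le⟩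
  · rintro ⟨w1, w2⟩ hw
    obtain ⟨hw1, hw2⟩ := hw
    simp only at hw1 hw2
    obtain ⟨y, hy, hwy⟩ := mem_iUnion₂.mp (hscov hw1)
    obtain ⟨k, hk, hwk⟩ := mem_iUnion₂.mp (hKcov hw2)
    have hpL : ((y, z.2 - r ^ 2 + σ ^ 2 * (k:ℕ)), σ) ∈ L := by
      simp only [hL, List.mem_map]
      exact ⟨(y, k), List.mem_product.mpr ⟨Finset.mem_toList.mpr hy,
        List.mem_range.mpr (Finset.mem_range.mp hk)⟩, rfl⟩
    obtain ⟨j, hj, hjp⟩ := List.getElem_of_mem hpL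
    refine mem_iUnion.mpr ⟨j, ?_⟩
    have hfj : f j = ((y, z.2 - r ^ 2 + σ ^ 2 * (k:ℕ)), σ) := by
      rw [hf]; simp only [List.getD_eq_getElem _ _ hj]; exact hjp
    rw [hfj]
    exact ⟨hwy, hwk⟩
  · have hvanish : ∀ j ∉ Finset.range L.length, ENNReal.ofReal ((f j).2 ^ N) = 0 := by
      intro j hj
      rw [Finset.mem_range, not_lt] at hj
      have : (f j).2 = 0 := by rw [hf]; simp only [List.getD_eq_default _ _ hj]
      rw [this, zero_pow hN.ne', ENNReal.ofReal_zero]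
    rw [tsum_eq_sum hvanish]
    calc ∑ j ∈ Finset.range L.length, ENNReal.ofReal ((f j).2 ^ N)
        ≤ ∑ _j ∈ Finset.range L.length, ENNReal.ofReal (σ ^ N) := by
          refine Finset.sum_le_sum fun j _ => ENNReal.ofReal_le_ofReal ?_
          refine pow_le_pow_left₀ ?_ ?_ N
          · rcases hfcases j with h | h
            · rw [hLrad _ h]; exact hσ.le
            · rw [h]
          · rcases hfcases j with h | h
            · rw [hLrad _ h]
            · rw [h]; exact hσ.le
      _ = (L.length : ℝ≥0∞) * ENNReal.ofReal (σ ^ N) := by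
          rw [Finset.sum_const, Finset.card_range, nsmul_eq_mul]
      _ ≤ ENNReal.ofReal (3 * 4 ^ N * (r / σ) ^ 2 * r ^ N) := by
          rw [show ((L.length : ℝ≥0∞)) = ENNReal.ofReal (L.length : ℝ) by simp,
            ← ENNReal.ofReal_mul (by positivity)]
          refine ENNReal.ofReal_le_ofReal ?_
          have hlen : (L.length : ℝ) ≤ (4 * r / σ) ^ N * (3 * r ^ 2 / σ ^ 2) := by
            rw [hLlen]
            push_cast
            exact mul_le_mul hscard hK (by positivity) (by positivity)
          have heq : (4 * r / σ) ^ N * (3 * r ^ 2 / σ ^ 2) * σ ^ N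
              = 3 * 4 ^ N * (r / σ) ^ 2 * r ^ N := by
            field_simp
            rw [← mul_pow, div_mul_cancel₀ _ hσ.ne', mul_pow]
          calc (L.length : ℝ) * σ ^ N ≤ (4 * r / σ) ^ N * (3 * r ^ 2 / σ ^ 2) * σ ^ N :=
                mul_le_mul_of_nonneg_right hlen (by positivity)
            _ = _ := heq

lemma cover_piece (N : ℕ) (hN : 0 < N) (z : PSpace N) {r σ ρ : ℝ}
    (hσ : 0 < σ) (hσρ : σ ≤ ρ) (hr0 : 0 ≤ r) (hrρ : r ≤ ρ) :
    ∃ f : ℕ → PSpace N × ℝ, (∀ j, 0 ≤ (f j).2 ∧ (f j).2 ≤ σ) ∧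
      pQt N r z ⊆ ⋃ j, pQt N (f j).2 (f j).1 ∧
      ∑' j, ENNReal.ofReal ((f j).2 ^ N)
        ≤ ENNReal.ofReal (3 * 4 ^ N * (ρ / σ) ^ 2) * ENNReal.ofReal (r ^ N) := by
  classical
  have hρ : 0 < ρ := hσ.trans_le hσρ
  have hfac : (1:ℝ) ≤ 3 * 4 ^ N * (ρ / σ) ^ 2 := by
    have h1 : (1:ℝ) ≤ (ρ / σ) ^ 2 := one_le_pow₀ ((one_le_div hσ).mpr hσρ)
    have h2 : (1:ℝ) ≤ 3 * 4 ^ N := by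
      have : (1:ℝ) ≤ 4 ^ N := one_le_pow₀ (by norm_num)
      nlinarith
    nlinarith
  by_cases hcase : r ≤ σ
  · refine ⟨fun j => if j = 0 then (z, r) else ((z.1, z.2), 0), ?_, ?_, ?_⟩
    · intro j
      by_cases h : j = 0 <;> simp [h, hr0, hcase, hσ.le]
    · intro w hw
      exact mem_iUnion.mpr ⟨0, by simpa using hw⟩
    · have hvan : ∀ j ∉ ({0} : Finset ℕ),
          ENNReal.ofReal (((if j = 0 then (z, r) else ((z.1, z.2), 0)) : PSpace N × ℝ).2 ^ N)
            = 0 := by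
        intro j hj
        simp only [Finset.mem_singleton] at hj
        simp [hj, zero_pow hN.ne']
      rw [tsum_eq_sum hvan]
      simp only [Finset.sum_singleton, if_pos rfl]
      calc ENNReal.ofReal (r ^ N) = 1 * ENNReal.ofReal (r ^ N) := (one_mul _).symm
        _ ≤ ENNReal.ofReal (3 * 4 ^ N * (ρ / σ) ^ 2) * ENNReal.ofReal (r ^ N) :=
            mul_le_mul_left (by simpa using ENNReal.ofReal_le_ofReal hfac) _
  · push_neg at hcase
    obtain ⟨f, hf1, hf2, hf3⟩ := cyl_cover N hN z hσ hcase.le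
    refine ⟨f, hf1, hf2, hf3.trans ?_⟩
    rw [← ENNReal.ofReal_mul (by positivity)]
    refine ENNReal.ofReal_le_ofReal ?_
    have hdd : (r / σ) ^ 2 ≤ (ρ / σ) ^ 2 := by gcongr
    have h4 : (0:ℝ) < 4 ^ N := by positivity
    refine mul_le_mul_of_nonneg_right ?_ (pow_nonneg hr0 N)
    nlinarith


/-- Monotonicity and doubling property (1.14) of the parabolic Hausdorff capacity
`PH_ρ^N`: for `0 < σ ≤ ρ`, `PH_ρ^N(E) ≤ PH_σ^N(E) ≤ C(N) (ρ/σ)² PH_ρ^N(E)`. -/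
theorem PHcap_mono_doubling (N : ℕ) (hN : 2 ≤ N) :
    ∃ C > (0 : ℝ), ∀ σ ρ : ℝ, 0 < σ → σ ≤ ρ → ∀ E : Set (PSpace N),
      PHcap N ρ E ≤ PHcap N σ E ∧
      PHcap N σ E ≤ ENNReal.ofReal (C * (ρ / σ) ^ 2) * PHcap N ρ E := by
  classical
  have hN0 : 0 < N := by omega
  refine ⟨3 * 4 ^ N, by positivity, ?_⟩
  intro σ ρ hσ hσρ E
  have hρ : 0 < ρ := hσ.trans_le hσρ
  constructor
  · refine le_iInf fun c => le_iInf fun h => ?_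
    exact iInf₂_le c ⟨fun j => ⟨(h.1 j).1, (h.1 j).2.trans hσρ⟩, h.2⟩
  · set K : ℝ≥0∞ := ENNReal.ofReal (3 * 4 ^ N * (ρ / σ) ^ 2) with hKdef
    have hK0 : K ≠ 0 := by
      rw [hKdef]
      simp only [ne_eq, ENNReal.ofReal_eq_zero, not_le]
      positivity
    have hKtop : K ≠ ∞ := ENNReal.ofReal_ne_top
    have key : ∀ c : ℕ → PSpace N × ℝ,
        ((∀ j, 0 ≤ (c j).2 ∧ (c j).2 ≤ ρ) ∧ E ⊆ ⋃ j, pQt N (c j).2 (c j).1) →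
        PHcap N σ E ≤ K * ∑' j, ENNReal.ofReal ((c j).2 ^ N) := by
      intro c hc
      choose f hf1 hf2 hf3 using fun j =>
        cover_piece N hN0 (c j).1 hσ hσρ (hc.1 j).1 (hc.1 j).2
      set c' : ℕ → PSpace N × ℝ := fun n => f (Nat.unpair n).1 (Nat.unpair n).2 with hc'
      have hle : PHcap N σ E ≤ ∑' n, ENNReal.ofReal ((c' n).2 ^ N) := by
        refine iInf₂_le c' ⟨fun n => hf1 _ _, ?_⟩
        intro w hw
        obtain ⟨j, hj⟩ := mem_iUnion.mp (hc.2 hw)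
        obtain ⟨k, hk⟩ := mem_iUnion.mp (hf2 j hj)
        refine mem_iUnion.mpr ⟨Nat.pair j k, ?_⟩
        simp only [hc', Nat.unpair_pair]
        exact hk
      refine hle.trans ?_
      have hsum : ∑' n, ENNReal.ofReal ((c' n).2 ^ N)
          = ∑' (p : ℕ × ℕ), ENNReal.ofReal ((f p.1 p.2).2 ^ N) := by
        rw [← Equiv.tsum_eq Nat.pairEquiv (fun n => ENNReal.ofReal ((c' n).2 ^ N))]
        refine tsum_congr fun p => ?_
        simp [hc', Nat.pairEquiv_apply, Function.uncurry, Nat.unpair_pair]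
      rw [hsum, ENNReal.tsum_prod']
      calc ∑' (j : ℕ), ∑' (k : ℕ), ENNReal.ofReal ((f j k).2 ^ N)
          ≤ ∑' (j : ℕ), K * ENNReal.ofReal ((c j).2 ^ N) :=
            ENNReal.tsum_le_tsum fun j => hf3 j
        _ = K * ∑' j, ENNReal.ofReal ((c j).2 ^ N) := ENNReal.tsum_mul_left
    have hdiv : PHcap N σ E / K ≤ PHcap N ρ E := by
      refine le_iInf fun c => le_iInf fun h => ?_
      exact ENNReal.div_le_of_le_mul' (key c h)
    calc PHcap N σ E = PHcap N σ E / K * K := (ENNReal.div_mul_cancel hK0 hKtop).symm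
      _ ≤ PHcap N ρ E * K := mul_le_mul_left hdiv K
      _ = K * PHcap N ρ E := mul_comm _ _
end

section
/- Let N ≥ 2 and R > 0. There exist positive constants C₁, C₂ (depending only on N and R) such that for every nonnegative Radon measure μ on ℝ^{N+1} with ‖M_2^R[μ]‖_{L^∞(ℝ^{N+1})} ≤ 1, and for every cylinder Q = Q̃_r(y,s) ⊂ ℝ^{N+1} with r > 0, one has (1/|Q|) ∫_Q exp( C₁ I_2^R[χ_Q μ] ) dx dt ≤ C₂, where χ_Q μ is the restriction of μ to Q and |Q| is the Lebesgue measure of Q. -/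
open MeasureTheory Metric Set
open scoped ENNReal NNReal

section AuxLemmas

namespace ExpRiesz

open Function

noncomputable def vB (N : ℕ) : ℝ≥0∞ := volume (ball (0 : EuclideanSpace ℝ (Fin N)) 1)

variable {N : ℕ}

lemma mem_pQt {ρ : ℝ} {z u : PSpace N} :
    u ∈ pQt N ρ z ↔ dist u.1 z.1 < ρ ∧ (z.2 - ρ ^ 2 < u.2 ∧ u.2 < z.2 + ρ ^ 2) := by
  simp [pQt, mem_ball]

lemma pQt_comm {ρ : ℝ} {z u : PSpace N} :
    u ∈ pQt N ρ z ↔ z ∈ pQt N ρ u := by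
  simp only [mem_pQt]
  rw [dist_comm]
  constructor <;> rintro ⟨h1, h2, h3⟩ <;> exact ⟨h1, by linarith, by linarith⟩

lemma isOpen_pQt (ρ : ℝ) (z : PSpace N) : IsOpen (pQt N ρ z) :=
  isOpen_ball.prod isOpen_Ioo

lemma measurableSet_pQt (ρ : ℝ) (z : PSpace N) :
    MeasurableSet (pQt N ρ z) := (isOpen_pQt ρ z).measurableSet

lemma volume_prod_ball (hN : N ≠ 0) (x : EuclideanSpace ℝ (Fin N)) {a : ℝ} (ha : 0 ≤ a)
    (c d : ℝ) :
    volume ((ball x a ×ˢ Ioo c d : Set (PSpace N)))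
      = ENNReal.ofReal (a ^ N) * vB N * ENNReal.ofReal (d - c) := by
  haveI : Nonempty (Fin N) := Fin.pos_iff_nonempty.mp (Nat.pos_of_ne_zero hN)
  rw [Measure.volume_eq_prod, Measure.prod_prod, Real.volume_Ioo,
    Measure.addHaar_ball volume x ha, finrank_euclideanSpace_fin]
  rfl

lemma volume_pQt (hN : N ≠ 0) {ρ : ℝ} (hρ : 0 ≤ ρ) (z : PSpace N) :
    volume (pQt N ρ z) = vB N * ENNReal.ofReal (2 * ρ ^ (N + 2)) := by
  rw [pQt, volume_prod_ball hN z.1 hρ]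
  rw [show z.2 + ρ ^ 2 - (z.2 - ρ ^ 2) = 2 * ρ ^ 2 by ring]
  rw [mul_comm (ENNReal.ofReal (ρ ^ N)) (vB N), mul_assoc,
    ← ENNReal.ofReal_mul (by positivity)]
  congr 2
  ring

lemma vB_pos (hN : N ≠ 0) : 0 < vB N := by
  haveI : Nonempty (Fin N) := Fin.pos_iff_nonempty.mp (Nat.pos_of_ne_zero hN)
  exact measure_ball_pos _ _ one_pos

lemma vB_ne_top : vB N ≠ ⊤ := measure_ball_lt_top.ne

/-- Joint measurability of `(w, ρ) ↦ ν (pQt N ρ w)`. -/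
lemma measurable_nuQt (ν : Measure (PSpace N)) [SFinite ν] :
    Measurable (fun p : PSpace N × ℝ => ν (pQt N p.2 p.1)) := by
  have hs : MeasurableSet {q : (PSpace N × ℝ) × PSpace N | q.2 ∈ pQt N q.1.2 q.1.1} := by
    apply IsOpen.measurableSet
    have hrw : {q : (PSpace N × ℝ) × PSpace N | q.2 ∈ pQt N q.1.2 q.1.1} =
        {q : (PSpace N × ℝ) × PSpace N | dist q.2.1 q.1.1.1 < q.1.2} ∩
        ({q : (PSpace N × ℝ) × PSpace N | q.1.1.2 - q.1.2 ^ 2 < q.2.2} ∩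
         {q : (PSpace N × ℝ) × PSpace N | q.2.2 < q.1.1.2 + q.1.2 ^ 2}) := by
      ext q; simp [mem_pQt, and_assoc]
    rw [hrw]
    refine IsOpen.inter (isOpen_lt (by fun_prop) (by fun_prop))
      (IsOpen.inter (isOpen_lt (by fun_prop) (by fun_prop))
        (isOpen_lt (by fun_prop) (by fun_prop)))
  have h := measurable_measure_prodMk_left (ν := ν) hs
  have heq : ∀ p : PSpace N × ℝ,
      (Prod.mk p ⁻¹' {q : (PSpace N × ℝ) × PSpace N | q.2 ∈ pQt N q.1.2 q.1.1})
        = pQt N p.2 p.1 := by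
    intro p; ext u; simp
  simpa only [heq] using h

/-- The integrand of the Riesz potential. -/
noncomputable def pf (N : ℕ) (ν : Measure (PSpace N)) (w : PSpace N) (ρ : ℝ) : ℝ≥0∞ :=
  ν (pQt N ρ w) / ENNReal.ofReal (ρ ^ (N + 1))

lemma measurable_pf (ν : Measure (PSpace N)) [SFinite ν] :
    Measurable (uncurry (pf N ν)) := by
  apply Measurable.div
  · exact measurable_nuQt ν
  · exact (measurable_snd.pow_const _).ennreal_ofReal

lemma riesz_eq (R : ℝ) (ν : Measure (PSpace N)) (w : PSpace N) :
    riesz N R ν w = ∫⁻ ρ in Ioo (0 : ℝ) R, pf N ν w ρ := rfl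

lemma measurable_riesz (R : ℝ) (ν : Measure (PSpace N)) [SFinite ν] :
    Measurable (riesz N R ν) :=
  Measurable.lintegral_prod_right (measurable_pf ν)

lemma measurable_J (δ : ℝ) (ν : Measure (PSpace N)) [SFinite ν] :
    Measurable (fun w => ∫⁻ ρ in Ioc (0 : ℝ) δ, pf N ν w ρ) :=
  Measurable.lintegral_prod_right (measurable_pf ν)

/-- Fubini: integrating the measure of cylinders. -/
lemma lintegral_nuQt (hN : N ≠ 0) (ν : Measure (PSpace N)) [SFinite ν] {ρ : ℝ} (hρ : 0 ≤ ρ) :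
    ∫⁻ w, ν (pQt N ρ w) = ν univ * (vB N * ENNReal.ofReal (2 * ρ ^ (N + 2))) := by
  have hs : MeasurableSet {q : PSpace N × PSpace N | q.2 ∈ pQt N ρ q.1} := by
    apply IsOpen.measurableSet
    have hrw : {q : PSpace N × PSpace N | q.2 ∈ pQt N ρ q.1} =
        {q : PSpace N × PSpace N | dist q.2.1 q.1.1 < ρ} ∩
        ({q : PSpace N × PSpace N | q.1.2 - ρ ^ 2 < q.2.2} ∩
         {q : PSpace N × PSpace N | q.2.2 < q.1.2 + ρ ^ 2}) := by
      ext q; simp [mem_pQt, and_assoc]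
    rw [hrw]
    refine IsOpen.inter (isOpen_lt (by fun_prop) (by fun_prop))
      (IsOpen.inter (isOpen_lt (by fun_prop) (by fun_prop))
        (isOpen_lt (by fun_prop) (by fun_prop)))
  have h1 : ∀ w : PSpace N,
      (Prod.mk w ⁻¹' {q : PSpace N × PSpace N | q.2 ∈ pQt N ρ q.1}) = pQt N ρ w := by
    intro w; ext u; simp
  calc ∫⁻ w, ν (pQt N ρ w)
      = ∫⁻ w, ν (Prod.mk w ⁻¹' {q : PSpace N × PSpace N | q.2 ∈ pQt N ρ q.1}) := by
        simp only [h1]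
    _ = (volume.prod ν) {q : PSpace N × PSpace N | q.2 ∈ pQt N ρ q.1} :=
        (Measure.prod_apply hs).symm
    _ = ∫⁻ u, volume ((fun w => (w, u)) ⁻¹' {q : PSpace N × PSpace N | q.2 ∈ pQt N ρ q.1}) ∂ν :=
        Measure.prod_apply_symm hs
    _ = ∫⁻ u, volume (pQt N ρ u) ∂ν := by
        apply lintegral_congr
        intro u
        congr 1
        ext w
        simpa using pQt_comm (z := w) (u := u)
    _ = ν univ * (vB N * ENNReal.ofReal (2 * ρ ^ (N + 2))) := by
        simp only [volume_pQt hN hρ]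
        rw [lintegral_const]
        ring

end ExpRiesz

end AuxLemmas

section AuxLemmas2

namespace ExpRiesz

open Function

variable {N : ℕ}

lemma lint_inv_Icc {a b : ℝ} (ha : 0 < a) (hab : a ≤ b) :
    ∫⁻ x in Icc a b, ENNReal.ofReal x⁻¹ = ENNReal.ofReal (Real.log (b / a)) := by
  rw [← Measure.restrict_congr_set Ioc_ae_eq_Icc,
    ← ofReal_integral_eq_lintegral_ofReal]
  · rw [← intervalIntegral.integral_of_le hab, integral_inv_of_pos ha (ha.trans_le hab)]
  · refine IntegrableOn.mono_set ?_ Ioc_subset_Icc_self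
    refine ContinuousOn.integrableOn_Icc ?_
    exact ContinuousOn.inv₀ continuousOn_id fun x hx => (ha.trans_le hx.1).ne'
  · filter_upwards [ae_restrict_mem measurableSet_Ioc] with x hx
    exact inv_nonneg.mpr (ha.trans hx.1).le

lemma lint_powinv_Icc (hN : N ≠ 0) {a b : ℝ} (ha : 0 < a) (hab : a ≤ b) :
    ∫⁻ x in Icc a b, ENNReal.ofReal ((x ^ (N + 1))⁻¹)
      ≤ ENNReal.ofReal (1 / (N * a ^ N)) := by
  have hNpos : (0 : ℝ) < N := by
    exact_mod_cast Nat.pos_of_ne_zero hN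
  rw [← Measure.restrict_congr_set Ioc_ae_eq_Icc,
    ← ofReal_integral_eq_lintegral_ofReal]
  · apply ENNReal.ofReal_le_ofReal
    have hzpow : ∀ x : ℝ, (x ^ (N + 1))⁻¹ = x ^ (-(N + 1 : ℕ) : ℤ) := by
      intro x; rw [zpow_neg, zpow_natCast]
    have h0 : (0 : ℝ) ∉ uIcc a b := by
      rw [uIcc_of_le hab]
      rintro ⟨h1, -⟩
      exact absurd h1 (not_le.mpr ha)
    have hval : ∫ x in Ioc a b, (x ^ (N + 1))⁻¹
        = (b ^ (-(N : ℤ)) - a ^ (-(N : ℤ))) / (-(N : ℝ)) := by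
      simp only [hzpow]
      rw [← intervalIntegral.integral_of_le hab,
        integral_zpow (Or.inr ⟨by omega, h0⟩)]
      have he : (-(N + 1 : ℕ) : ℤ) + 1 = -(N : ℤ) := by push_cast; ring
      rw [he]
      congr 1
      push_cast
      ring
    rw [hval]
    have hb : (0 : ℝ) < b := ha.trans_le hab
    have h1 : (0:ℝ) ≤ b ^ (-(N : ℤ)) := by positivity
    have h2 : a ^ (-(N : ℤ)) = (a ^ N)⁻¹ := by rw [zpow_neg, zpow_natCast]
    have key : (b ^ (-(N : ℤ)) - a ^ (-(N : ℤ))) / (-(N : ℝ))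
        = ((a ^ N)⁻¹ - b ^ (-(N : ℤ))) / N := by rw [h2]; ring
    have h3 : (1:ℝ) / (N * a ^ N) = (a ^ N)⁻¹ / N := by
      rw [one_div, mul_inv]
      ring
    rw [key, h3, div_le_div_iff_of_pos_right hNpos]
    exact sub_le_self _ h1
  · refine IntegrableOn.mono_set ?_ Ioc_subset_Icc_self
    refine ContinuousOn.integrableOn_Icc ?_
    refine ContinuousOn.inv₀ (continuousOn_pow _) fun x hx => ?_
    have : (0:ℝ) < x := ha.trans_le hx.1
    positivity
  · filter_upwards [ae_restrict_mem measurableSet_Ioc] with x hx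
    exact inv_nonneg.mpr (pow_nonneg (ha.trans hx.1).le _)

lemma lint_two_mul {δ : ℝ} (hδ : 0 ≤ δ) :
    ∫⁻ x in Ioc (0 : ℝ) δ, ENNReal.ofReal (2 * x) = ENNReal.ofReal (δ ^ 2) := by
  rw [← ofReal_integral_eq_lintegral_ofReal]
  · congr 1
    rw [← intervalIntegral.integral_of_le hδ]
    rw [intervalIntegral.integral_const_mul, integral_id]
    ring
  · exact (continuous_const.mul continuous_id).integrableOn_Ioc
  · filter_upwards [ae_restrict_mem measurableSet_Ioc] with x hx
    exact mul_nonneg zero_le_two hx.1.le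

end ExpRiesz

end AuxLemmas2
section AuxLemmas3

namespace ExpRiesz

open Function

variable {N : ℕ}

lemma lintegral_J_le (hN : N ≠ 0) (ν : Measure (PSpace N)) [IsFiniteMeasure ν] {δ : ℝ}
    (hδ : 0 ≤ δ) :
    ∫⁻ w, ∫⁻ ρ in Ioc (0 : ℝ) δ, pf N ν w ρ ≤ ν univ * vB N * ENNReal.ofReal (δ ^ 2) := by
  rw [lintegral_lintegral_swap ((measurable_pf ν).aemeasurable)]
  have hMtop : ν univ * vB N ≠ ⊤ := ENNReal.mul_ne_top (measure_ne_top ν univ) vB_ne_top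
  calc ∫⁻ ρ in Ioc (0 : ℝ) δ, ∫⁻ w, pf N ν w ρ
      ≤ ∫⁻ ρ in Ioc (0 : ℝ) δ, ν univ * vB N * ENNReal.ofReal (2 * ρ) := by
        refine setLIntegral_mono (by fun_prop) ?_
        intro ρ hρ
        have hρ0 : (0 : ℝ) < ρ := hρ.1
        have hcne : ENNReal.ofReal (ρ ^ (N + 1)) ≠ 0 :=
          (ENNReal.ofReal_pos.mpr (by positivity)).ne'
        have hcinv : (ENNReal.ofReal (ρ ^ (N + 1)))⁻¹ ≠ ⊤ := by
          rw [ENNReal.inv_ne_top]; exact hcne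
        have h1 : ∫⁻ w, pf N ν w ρ
            = (∫⁻ w, ν (pQt N ρ w)) * (ENNReal.ofReal (ρ ^ (N + 1)))⁻¹ := by
          simp only [pf, div_eq_mul_inv]
          exact lintegral_mul_const' _ _ hcinv
        have h2 : ENNReal.ofReal (2 * ρ ^ (N + 2)) * (ENNReal.ofReal (ρ ^ (N + 1)))⁻¹
            = ENNReal.ofReal (2 * ρ) := by
          rw [← ENNReal.ofReal_inv_of_pos (by positivity), ← ENNReal.ofReal_mul (by positivity)]
          congr 1
          rw [pow_succ]
          field_simp
        rw [h1, lintegral_nuQt hN ν hρ0.le,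
          show ν univ * (vB N * ENNReal.ofReal (2 * ρ ^ (N + 2)))
              * (ENNReal.ofReal (ρ ^ (N + 1)))⁻¹
            = ν univ * vB N * (ENNReal.ofReal (2 * ρ ^ (N + 2))
              * (ENNReal.ofReal (ρ ^ (N + 1)))⁻¹) by ring, h2]
    _ = ν univ * vB N * ∫⁻ ρ in Ioc (0 : ℝ) δ, ENNReal.ofReal (2 * ρ) :=
        lintegral_const_mul' _ _ hMtop
    _ = ν univ * vB N * ENNReal.ofReal (δ ^ 2) := by rw [lint_two_mul hδ]

end ExpRiesz

end AuxLemmas3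
set_option maxHeartbeats 1600000 in
/-- **Theorem 2.3.** Exponential integrability of the truncated Riesz parabolic
potential of a measure whose fractional maximal potential is bounded by `1`:
`⨍_Q exp(C₁ I_2^R[χ_Q μ]) ≤ C₂` for every cylinder `Q = Q̃_r(y,s)`. -/
theorem exp_integrability_riesz_potential (N : ℕ) (hN : 2 ≤ N) (R : ℝ) (hR : 0 < R) :
    ∃ C₁ > (0 : ℝ), ∃ C₂ > (0 : ℝ), ∀ μ : Measure (PSpace N), IsLocallyFiniteMeasure μ →
      (∀ z : PSpace N, maxPot N R μ z ≤ 1) →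
      ∀ r > (0 : ℝ), ∀ z₀ : PSpace N,
        (∫⁻ w in pQt N r z₀, expE (ENNReal.ofReal C₁ * riesz N R (μ.restrict (pQt N r z₀)) w))
          ≤ ENNReal.ofReal C₂ * volume (pQt N r z₀) := by
  classical
  open ExpRiesz in
  have hN0 : N ≠ 0 := by omega
  set C₀ : ℝ := 1 + 2 ^ (N + 1) / N with hC₀def
  have hNR : (0:ℝ) < N := by exact_mod_cast Nat.pos_of_ne_zero hN0
  have hC₀1 : 1 ≤ C₀ := by
    rw [hC₀def]
    have : (0:ℝ) ≤ 2 ^ (N+1) / N := by positivity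
    linarith
  set Cp : ℝ := C₀ + 1 with hCpdef
  have hCp : 0 < Cp := by linarith
  refine ⟨1, one_pos, Real.exp (Cp + 1) * (1 + 2 ^ (N + 1)), by positivity, ?_⟩
  intro μ hμloc hμmax r hr z₀
  haveI : SigmaFinite μ := inferInstance
  set Q : Set (PSpace N) := pQt N r z₀ with hQdef
  have hQmeas : MeasurableSet Q := ExpRiesz.measurableSet_pQt r z₀
  set ν : Measure (PSpace N) := μ.restrict Q with hνdef
  haveI : IsFiniteMeasure ν := by
    constructor
    rw [hνdef, Measure.restrict_apply_univ]
    refine lt_of_le_of_lt (measure_mono subset_closure) ?_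
    refine IsCompact.measure_lt_top ?_
    refine Metric.isCompact_of_isClosed_isBounded isClosed_closure ?_
    refine Bornology.IsBounded.closure ?_
    exact isBounded_ball.prod (isBounded_Ioo _ _)
  set r₁ : ℝ := min r (R / 2) with hr₁def
  have hr₁0 : 0 < r₁ := lt_min hr (by linarith)
  have hr₁r : r₁ ≤ r := min_le_left _ _
  have hr₁R2 : r₁ ≤ R / 2 := min_le_right _ _
  have hr₁R : r₁ < R := by linarith
  -- Step 1 : smallness of μ on small cylinders
  have hsmall : ∀ ρ : ℝ, 0 < ρ → ρ < R → ∀ w : PSpace N,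
      μ (pQt N ρ w) ≤ ENNReal.ofReal (ρ ^ N) := by
    intro ρ hρ0 hρR w
    have h1 : μ (pQt N ρ w) / ENNReal.ofReal (ρ ^ N) ≤ maxPot N R μ w := by
      exact le_iSup₂ (f := fun (ρ : ℝ) (_ : ρ ∈ Ioo (0:ℝ) R) =>
        μ (pQt N ρ w) / ENNReal.ofReal (ρ ^ N)) ρ ⟨hρ0, hρR⟩
    have h2 : μ (pQt N ρ w) / ENNReal.ofReal (ρ ^ N) ≤ 1 := h1.trans (hμmax w)
    rw [ENNReal.div_le_iff (ENNReal.ofReal_pos.mpr (by positivity)).ne'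
      ENNReal.ofReal_ne_top, one_mul] at h2
    exact h2
  have hνμ : ∀ (ρ : ℝ) (w : PSpace N), ν (pQt N ρ w) ≤ μ (pQt N ρ w) := by
    intro ρ w
    rw [hνdef, Measure.restrict_apply (ExpRiesz.measurableSet_pQt ρ w)]
    exact measure_mono inter_subset_left
  have hνsmall : ∀ ρ : ℝ, 0 < ρ → ρ < R → ∀ w : PSpace N,
      ν (pQt N ρ w) ≤ ENNReal.ofReal (ρ ^ N) :=
    fun ρ h1 h2 w => (hνμ ρ w).trans (hsmall ρ h1 h2 w)
  set M : ℝ≥0∞ := ν univ with hMdef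
  have hMtop : M ≠ ⊤ := measure_ne_top ν univ
  -- Step 2 : mass bound
  have hmass : M ≤ ENNReal.ofReal (2 ^ (N + 1) * r ^ (N + 2) / r₁ ^ 2) := by
    set W₀ : Set (PSpace N) :=
      ball z₀.1 (r + r₁) ×ˢ Ioo (z₀.2 - (r ^ 2 + r₁ ^ 2)) (z₀.2 + (r ^ 2 + r₁ ^ 2)) with hW₀def
    have hW₀meas : MeasurableSet W₀ := (isOpen_ball.prod isOpen_Ioo).measurableSet
    have hpoint : ∀ w : PSpace N,
        ν (pQt N r₁ w) ≤ W₀.indicator (fun _ => ENNReal.ofReal (r₁ ^ N)) w := by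
      intro w
      by_cases hw : w ∈ W₀
      · rw [indicator_of_mem hw]
        exact hνsmall r₁ hr₁0 hr₁R w
      · rw [indicator_of_notMem hw]
        rw [hνdef, Measure.restrict_apply (ExpRiesz.measurableSet_pQt _ _)]
        have hempty : pQt N r₁ w ∩ Q = ∅ := by
          rw [eq_empty_iff_forall_notMem]
          rintro u ⟨hu1, hu2⟩
          apply hw
          rw [ExpRiesz.mem_pQt] at hu1
          rw [hQdef, ExpRiesz.mem_pQt] at hu2
          rw [hW₀def, mem_prod]
          constructor
          · simp only [mem_ball]
            calc dist w.1 z₀.1 ≤ dist w.1 u.1 + dist u.1 z₀.1 := dist_triangle _ _ _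
              _ < r₁ + r := by
                  rw [dist_comm w.1 u.1]
                  exact add_lt_add hu1.1 hu2.1
              _ = r + r₁ := by ring
          · simp only [mem_Ioo]
            obtain ⟨-, h2, h3⟩ := hu1
            obtain ⟨-, h4, h5⟩ := hu2
            constructor <;> linarith
        rw [hempty, measure_empty]
      -- end hpoint
    have hkey : M * (vB N * ENNReal.ofReal (2 * r₁ ^ (N + 2)))
        ≤ ENNReal.ofReal (r₁ ^ N)
          * (ENNReal.ofReal ((r + r₁) ^ N) * vB N * ENNReal.ofReal (2 * (r ^ 2 + r₁ ^ 2))) := by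
      rw [hMdef, ← ExpRiesz.lintegral_nuQt hN0 ν hr₁0.le]
      calc ∫⁻ w, ν (pQt N r₁ w)
          ≤ ∫⁻ w, W₀.indicator (fun _ => ENNReal.ofReal (r₁ ^ N)) w := lintegral_mono hpoint
        _ = ENNReal.ofReal (r₁ ^ N) * volume W₀ := by
            rw [lintegral_indicator hW₀meas, setLIntegral_const]
        _ = ENNReal.ofReal (r₁ ^ N) * (ENNReal.ofReal ((r + r₁) ^ N) * vB N
              * ENNReal.ofReal (2 * (r ^ 2 + r₁ ^ 2))) := by
            rw [hW₀def, ExpRiesz.volume_prod_ball hN0 z₀.1 (by positivity : (0:ℝ) ≤ r + r₁),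
              show z₀.2 + (r ^ 2 + r₁ ^ 2) - (z₀.2 - (r ^ 2 + r₁ ^ 2)) = 2 * (r ^ 2 + r₁ ^ 2)
                from by ring]
    have hreal : r₁ ^ N * ((r + r₁) ^ N * (2 * (r ^ 2 + r₁ ^ 2)))
        ≤ 2 ^ (N + 1) * r ^ (N + 2) / r₁ ^ 2 * (2 * r₁ ^ (N + 2)) := by
      have h2 : 2 ^ (N + 1) * r ^ (N + 2) / r₁ ^ 2 * (2 * r₁ ^ (N + 2))
          = 2 ^ (N + 2) * r ^ (N + 2) * r₁ ^ N := by
        field_simp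
        ring
      rw [h2]
      have h1 : (r + r₁) ^ N ≤ (2 * r) ^ N :=
        pow_le_pow_left₀ (by linarith) (by linarith) N
      have h3 : (r + r₁) ^ N * (2 * (r ^ 2 + r₁ ^ 2)) ≤ (2 * r) ^ N * (4 * r ^ 2) := by
        apply mul_le_mul h1 (by nlinarith) (by positivity) (by positivity)
      calc r₁ ^ N * ((r + r₁) ^ N * (2 * (r ^ 2 + r₁ ^ 2)))
          ≤ r₁ ^ N * ((2 * r) ^ N * (4 * r ^ 2)) :=
            mul_le_mul_of_nonneg_left h3 (by positivity)
        _ = 2 ^ (N + 2) * r ^ (N + 2) * r₁ ^ N := by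
            rw [mul_pow]
            ring
    have hstep : ENNReal.ofReal (r₁ ^ N)
          * (ENNReal.ofReal ((r + r₁) ^ N) * vB N * ENNReal.ofReal (2 * (r ^ 2 + r₁ ^ 2)))
        ≤ ENNReal.ofReal (2 ^ (N + 1) * r ^ (N + 2) / r₁ ^ 2)
          * (vB N * ENNReal.ofReal (2 * r₁ ^ (N + 2))) := by
      have e1 : ENNReal.ofReal (r₁ ^ N)
            * (ENNReal.ofReal ((r + r₁) ^ N) * vB N * ENNReal.ofReal (2 * (r ^ 2 + r₁ ^ 2)))
          = ENNReal.ofReal (r₁ ^ N * ((r + r₁) ^ N * (2 * (r ^ 2 + r₁ ^ 2)))) * vB N := by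
        rw [ENNReal.ofReal_mul (p := r₁ ^ N) (by positivity),
          ENNReal.ofReal_mul (p := (r + r₁) ^ N) (by positivity)]
        ring
      have e2 : ENNReal.ofReal (2 ^ (N + 1) * r ^ (N + 2) / r₁ ^ 2)
            * (vB N * ENNReal.ofReal (2 * r₁ ^ (N + 2)))
          = ENNReal.ofReal (2 ^ (N + 1) * r ^ (N + 2) / r₁ ^ 2 * (2 * r₁ ^ (N + 2))) * vB N := by
        rw [ENNReal.ofReal_mul (p := 2 ^ (N + 1) * r ^ (N + 2) / r₁ ^ 2) (by positivity)]
        ring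
      rw [e1, e2]
      exact mul_le_mul_left (ENNReal.ofReal_le_ofReal hreal) _
    have hc0 : (vB N * ENNReal.ofReal (2 * r₁ ^ (N + 2))) ≠ 0 := by
      apply mul_ne_zero (ExpRiesz.vB_pos hN0).ne'
      exact (ENNReal.ofReal_pos.mpr (by positivity)).ne'
    have hctop : (vB N * ENNReal.ofReal (2 * r₁ ^ (N + 2))) ≠ ⊤ :=
      ENNReal.mul_ne_top ExpRiesz.vB_ne_top ENNReal.ofReal_ne_top
    have := hkey.trans hstep
    exact (ENNReal.mul_le_mul_iff_left hc0 hctop).mp this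
  -- Step 3 : distribution bound
  have hdist : ∀ t : ℝ, 0 ≤ t →
      volume {w : PSpace N | ENNReal.ofReal (Cp + t) ≤ riesz N R ν w}
        ≤ ExpRiesz.vB N
            * ENNReal.ofReal (2 ^ (N + 1) * r ^ (N + 2) * Real.exp (-(2 * t))) := by
    intro t ht
    set δ : ℝ := r₁ * Real.exp (-t) with hδdef
    have hδ0 : 0 < δ := by positivity
    have hδr₁ : δ ≤ r₁ := by
      rw [hδdef]
      have h1 : Real.exp (-t) ≤ 1 := Real.exp_le_one_iff.mpr (by linarith)
      nlinarith
    have htail : ∀ w : PSpace N, riesz N R ν w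
        ≤ (∫⁻ ρ in Ioc (0 : ℝ) δ, ExpRiesz.pf N ν w ρ) + ENNReal.ofReal (t + C₀) := by
      intro w
      have hsub : Ioo (0 : ℝ) R ⊆ Ioc 0 δ ∪ (Ioo δ r₁ ∪ Ico r₁ R) := by
        intro x hx
        rcases le_or_gt x δ with h | h
        · exact Or.inl ⟨hx.1, h⟩
        · rcases lt_or_ge x r₁ with h2 | h2
          · exact Or.inr (Or.inl ⟨h, h2⟩)
          · exact Or.inr (Or.inr ⟨h2, hx.2⟩)
      have hstart : riesz N R ν w ≤ (∫⁻ ρ in Ioc (0 : ℝ) δ, ExpRiesz.pf N ν w ρ)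
          + ((∫⁻ ρ in Ioo δ r₁, ExpRiesz.pf N ν w ρ)
            + (∫⁻ ρ in Ico r₁ R, ExpRiesz.pf N ν w ρ)) := by
        rw [ExpRiesz.riesz_eq]
        refine le_trans (lintegral_mono_set hsub) ?_
        refine le_trans (lintegral_union_le _ _ _) ?_
        exact add_le_add_right (lintegral_union_le _ _ _) _
      have hpart1 : ∫⁻ ρ in Ioo δ r₁, ExpRiesz.pf N ν w ρ ≤ ENNReal.ofReal t := by
        have hmono : ∀ ρ ∈ Ioo δ r₁, ExpRiesz.pf N ν w ρ ≤ ENNReal.ofReal ρ⁻¹ := by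
          intro ρ hρ
          have hρ0 : 0 < ρ := hδ0.trans hρ.1
          have hρR : ρ < R := lt_of_lt_of_le hρ.2 hr₁R.le
          calc ExpRiesz.pf N ν w ρ
              ≤ ENNReal.ofReal (ρ ^ N) / ENNReal.ofReal (ρ ^ (N + 1)) :=
                ENNReal.div_le_div_right (hνsmall ρ hρ0 hρR w) _
            _ = ENNReal.ofReal ρ⁻¹ := by
                rw [← ENNReal.ofReal_div_of_pos (by positivity)]
                congr 1
                rw [pow_succ]
                field_simp
        calc ∫⁻ ρ in Ioo δ r₁, ExpRiesz.pf N ν w ρ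
            ≤ ∫⁻ ρ in Ioo δ r₁, ENNReal.ofReal ρ⁻¹ := setLIntegral_mono (by fun_prop) hmono
          _ ≤ ∫⁻ ρ in Icc δ r₁, ENNReal.ofReal ρ⁻¹ := lintegral_mono_set Ioo_subset_Icc_self
          _ = ENNReal.ofReal (Real.log (r₁ / δ)) := ExpRiesz.lint_inv_Icc hδ0 hδr₁
          _ = ENNReal.ofReal t := by
              congr 1
              rw [hδdef, show r₁ / (r₁ * Real.exp (-t)) = Real.exp t from by
                rw [Real.exp_neg]
                field_simp]
              exact Real.log_exp t
      have hpart2 : ∫⁻ ρ in Ico r₁ R, ExpRiesz.pf N ν w ρ ≤ ENNReal.ofReal C₀ := by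
        rcases le_or_gt (R / 2) r with hcase | hcase
        · have hmono : ∀ ρ ∈ Ico r₁ R, ExpRiesz.pf N ν w ρ ≤ ENNReal.ofReal ρ⁻¹ := by
            intro ρ hρ
            have hρ0 : 0 < ρ := lt_of_lt_of_le hr₁0 hρ.1
            calc ExpRiesz.pf N ν w ρ
                ≤ ENNReal.ofReal (ρ ^ N) / ENNReal.ofReal (ρ ^ (N + 1)) :=
                  ENNReal.div_le_div_right (hνsmall ρ hρ0 hρ.2 w) _
              _ = ENNReal.ofReal ρ⁻¹ := by
                  rw [← ENNReal.ofReal_div_of_pos (by positivity)]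
                  congr 1
                  rw [pow_succ]
                  field_simp
          have hr₁eq : r₁ = R / 2 := min_eq_right hcase
          calc ∫⁻ ρ in Ico r₁ R, ExpRiesz.pf N ν w ρ
              ≤ ∫⁻ ρ in Ico r₁ R, ENNReal.ofReal ρ⁻¹ := setLIntegral_mono (by fun_prop) hmono
            _ ≤ ∫⁻ ρ in Icc r₁ R, ENNReal.ofReal ρ⁻¹ := lintegral_mono_set Ico_subset_Icc_self
            _ = ENNReal.ofReal (Real.log (R / r₁)) := ExpRiesz.lint_inv_Icc hr₁0 hr₁R.le
            _ ≤ ENNReal.ofReal C₀ := by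
                apply ENNReal.ofReal_le_ofReal
                rw [hr₁eq, show R / (R / 2) = 2 from by field_simp]
                have hlog : Real.log 2 ≤ 1 := by
                  have := Real.log_le_sub_one_of_pos (by norm_num : (0:ℝ) < 2)
                  linarith
                linarith
        · have hr₁eq : r₁ = r := min_eq_left (by linarith)
          have hmono : ∀ ρ ∈ Ico r₁ R, ExpRiesz.pf N ν w ρ
              ≤ M * ENNReal.ofReal ((ρ ^ (N + 1))⁻¹) := by
            intro ρ hρ
            have hρ0 : 0 < ρ := lt_of_lt_of_le hr₁0 hρ.1
            rw [ExpRiesz.pf, div_eq_mul_inv, ENNReal.ofReal_inv_of_pos (by positivity)]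
            exact mul_le_mul_left (measure_mono (subset_univ _)) _
          calc ∫⁻ ρ in Ico r₁ R, ExpRiesz.pf N ν w ρ
              ≤ ∫⁻ ρ in Ico r₁ R, M * ENNReal.ofReal ((ρ ^ (N + 1))⁻¹) :=
                setLIntegral_mono (by fun_prop) hmono
            _ = M * ∫⁻ ρ in Ico r₁ R, ENNReal.ofReal ((ρ ^ (N + 1))⁻¹) :=
                lintegral_const_mul' _ _ hMtop
            _ ≤ M * ∫⁻ ρ in Icc r₁ R, ENNReal.ofReal ((ρ ^ (N + 1))⁻¹) :=
                mul_le_mul_right (lintegral_mono_set Ico_subset_Icc_self) _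
            _ ≤ M * ENNReal.ofReal (1 / (N * r₁ ^ N)) :=
                mul_le_mul_right (ExpRiesz.lint_powinv_Icc hN0 hr₁0 hr₁R.le) _
            _ ≤ ENNReal.ofReal (2 ^ (N + 1) * r ^ (N + 2) / r₁ ^ 2)
                  * ENNReal.ofReal (1 / (N * r₁ ^ N)) := mul_le_mul_left hmass _
            _ ≤ ENNReal.ofReal C₀ := by
                rw [← ENNReal.ofReal_mul (by positivity)]
                apply ENNReal.ofReal_le_ofReal
                rw [hr₁eq]
                have heq : 2 ^ (N + 1) * r ^ (N + 2) / r ^ 2 * (1 / (N * r ^ N))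
                    = 2 ^ (N + 1) / N := by
                  field_simp
                  ring
                rw [heq, hC₀def]
                linarith
      calc riesz N R ν w
          ≤ (∫⁻ ρ in Ioc (0 : ℝ) δ, ExpRiesz.pf N ν w ρ)
            + ((∫⁻ ρ in Ioo δ r₁, ExpRiesz.pf N ν w ρ)
              + (∫⁻ ρ in Ico r₁ R, ExpRiesz.pf N ν w ρ)) := hstart
        _ ≤ (∫⁻ ρ in Ioc (0 : ℝ) δ, ExpRiesz.pf N ν w ρ)
            + (ENNReal.ofReal t + ENNReal.ofReal C₀) :=
            add_le_add_right (add_le_add hpart1 hpart2) _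
        _ = (∫⁻ ρ in Ioc (0 : ℝ) δ, ExpRiesz.pf N ν w ρ) + ENNReal.ofReal (t + C₀) := by
            rw [ENNReal.ofReal_add ht (by linarith)]
    have hsubset : {w : PSpace N | ENNReal.ofReal (Cp + t) ≤ riesz N R ν w}
        ⊆ {w : PSpace N | 1 ≤ ∫⁻ ρ in Ioc (0 : ℝ) δ, ExpRiesz.pf N ν w ρ} := by
      intro w hw
      simp only [mem_setOf_eq] at hw ⊢
      have h1 : ENNReal.ofReal (Cp + t)
          ≤ (∫⁻ ρ in Ioc (0 : ℝ) δ, ExpRiesz.pf N ν w ρ) + ENNReal.ofReal (t + C₀) :=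
        hw.trans (htail w)
      have h2 : ENNReal.ofReal (Cp + t) - ENNReal.ofReal (t + C₀)
          ≤ ∫⁻ ρ in Ioc (0 : ℝ) δ, ExpRiesz.pf N ν w ρ := tsub_le_iff_right.mpr h1
      calc (1 : ℝ≥0∞) = ENNReal.ofReal ((Cp + t) - (t + C₀)) := by
            rw [show (Cp + t) - (t + C₀) = 1 from by rw [hCpdef]; ring, ENNReal.ofReal_one]
        _ = ENNReal.ofReal (Cp + t) - ENNReal.ofReal (t + C₀) :=
            ENNReal.ofReal_sub _ (by linarith)
        _ ≤ _ := h2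
    calc volume {w : PSpace N | ENNReal.ofReal (Cp + t) ≤ riesz N R ν w}
        ≤ volume {w : PSpace N | 1 ≤ ∫⁻ ρ in Ioc (0 : ℝ) δ, ExpRiesz.pf N ν w ρ} :=
          measure_mono hsubset
      _ ≤ (∫⁻ w, ∫⁻ ρ in Ioc (0 : ℝ) δ, ExpRiesz.pf N ν w ρ) / 1 :=
          meas_ge_le_lintegral_div (ExpRiesz.measurable_J δ ν).aemeasurable one_ne_zero
            ENNReal.one_ne_top
      _ = ∫⁻ w, ∫⁻ ρ in Ioc (0 : ℝ) δ, ExpRiesz.pf N ν w ρ := by rw [div_one]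
      _ ≤ M * ExpRiesz.vB N * ENNReal.ofReal (δ ^ 2) := ExpRiesz.lintegral_J_le hN0 ν hδ0.le
      _ ≤ ENNReal.ofReal (2 ^ (N + 1) * r ^ (N + 2) / r₁ ^ 2) * ExpRiesz.vB N
            * ENNReal.ofReal (δ ^ 2) :=
          mul_le_mul_left (mul_le_mul_left hmass _) _
      _ = ExpRiesz.vB N
            * ENNReal.ofReal (2 ^ (N + 1) * r ^ (N + 2) / r₁ ^ 2 * δ ^ 2) := by
          rw [ENNReal.ofReal_mul (p := 2 ^ (N + 1) * r ^ (N + 2) / r₁ ^ 2) (by positivity)]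
          ring
      _ = ExpRiesz.vB N
            * ENNReal.ofReal (2 ^ (N + 1) * r ^ (N + 2) * Real.exp (-(2 * t))) := by
          congr 1
          rw [hδdef]
          have hexp : (Real.exp (-t)) ^ 2 = Real.exp (-(2 * t)) := by
            rw [← Real.exp_nat_mul]
            congr 1
            push_cast
            ring
          rw [mul_pow, hexp]
          field_simp
  -- Step 4 : conclusion
  have hImeas : Measurable (riesz N R ν) := ExpRiesz.measurable_riesz R ν
  set A : ℕ → Set (PSpace N) :=
    fun n => {w | ENNReal.ofReal (Cp + ((n : ℝ) + 1)) ≤ riesz N R ν w} with hAdef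
  have hAmeas : ∀ n, MeasurableSet (A n) := fun n => hImeas measurableSet_Ici
  set g : PSpace N → ℝ≥0∞ := fun w => ENNReal.ofReal (Real.exp (Cp + 1))
      + ∑' n : ℕ, (A n).indicator
          (fun _ => ENNReal.ofReal (Real.exp (Cp + ((n : ℝ) + 1) + 1))) w with hgdef
  have hvolQ : volume Q = ExpRiesz.vB N * ENNReal.ofReal (2 * r ^ (N + 2)) :=
    ExpRiesz.volume_pQt hN0 hr.le z₀
  have hpt : ∀ w, expE (ENNReal.ofReal 1 * riesz N R ν w) ≤ g w := by
    intro w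
    rw [ENNReal.ofReal_one, one_mul]
    by_cases hI : riesz N R ν w = ⊤
    · rw [expE, if_pos hI]
      have htop : (⊤ : ℝ≥0∞) ≤ ∑' n : ℕ, (A n).indicator
          (fun _ => ENNReal.ofReal (Real.exp (Cp + ((n : ℝ) + 1) + 1))) w := by
        calc (⊤ : ℝ≥0∞) = ∑' _ : ℕ, (1 : ℝ≥0∞) :=
              (ENNReal.tsum_const_eq_top_of_ne_zero one_ne_zero).symm
          _ ≤ _ := by
              refine ENNReal.tsum_le_tsum fun n => ?_
              have hwA : w ∈ A n := by
                simp only [hAdef, mem_setOf_eq, hI]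
                exact le_top
              rw [indicator_of_mem hwA]
              refine ENNReal.one_le_ofReal.mpr ?_
              nlinarith [Real.add_one_le_exp (Cp + ((n : ℝ) + 1) + 1)]
      exact le_trans htop (self_le_add_left _ _)
    · rw [expE, if_neg hI]
      set x : ℝ := (riesz N R ν w).toReal with hxdef
      have hx0 : 0 ≤ x := ENNReal.toReal_nonneg
      rcases le_or_gt x (Cp + 1) with hxle | hxgt
      · exact le_trans (ENNReal.ofReal_le_ofReal (Real.exp_le_exp.mpr hxle)) le_self_add
      · set n : ℕ := ⌊x - Cp - 1⌋₊ with hndef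
        have hn0 : (0 : ℝ) ≤ x - Cp - 1 := by linarith
        have hn1 : (n : ℝ) ≤ x - Cp - 1 := Nat.floor_le hn0
        have hn2 : x - Cp - 1 < n + 1 := Nat.lt_floor_add_one _
        have hwA : w ∈ A n := by
          simp only [hAdef, mem_setOf_eq]
          rw [← ENNReal.ofReal_toReal hI]
          exact ENNReal.ofReal_le_ofReal (by linarith)
        have hterm : ENNReal.ofReal (Real.exp x)
            ≤ (A n).indicator
              (fun _ => ENNReal.ofReal (Real.exp (Cp + ((n : ℝ) + 1) + 1))) w := by
          rw [indicator_of_mem hwA]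
          exact ENNReal.ofReal_le_ofReal (Real.exp_le_exp.mpr (by linarith))
        exact le_trans (hterm.trans (ENNReal.le_tsum n)) (le_add_left le_rfl)
  have hsum : ∫⁻ w in Q, g w
      = ENNReal.ofReal (Real.exp (Cp + 1)) * volume Q
        + ∑' n : ℕ, ENNReal.ofReal (Real.exp (Cp + ((n : ℝ) + 1) + 1))
            * (volume.restrict Q) (A n) := by
    rw [hgdef, lintegral_add_left measurable_const, setLIntegral_const,
      lintegral_tsum (fun n => (measurable_const.indicator (hAmeas n)).aemeasurable)]
    congr 1
    refine tsum_congr fun n => ?_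
    rw [lintegral_indicator (hAmeas n), setLIntegral_const]
  have hterm2 : ∀ n : ℕ, ENNReal.ofReal (Real.exp (Cp + ((n : ℝ) + 1) + 1))
        * (volume.restrict Q) (A n)
      ≤ (volume Q * ENNReal.ofReal (2 ^ N * Real.exp Cp)) * (2⁻¹ : ℝ≥0∞) ^ n := by
    intro n
    have h1 : (volume.restrict Q) (A n) ≤ volume (A n) := by
      rw [Measure.restrict_apply (hAmeas n)]
      exact measure_mono inter_subset_left
    have h2 := hdist ((n : ℝ) + 1) (by positivity)
    have hreal2 : Real.exp (Cp + ((n : ℝ) + 1) + 1)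
          * (2 ^ (N + 1) * r ^ (N + 2) * Real.exp (-(2 * ((n : ℝ) + 1))))
        = 2 * r ^ (N + 2) * (2 ^ N * Real.exp Cp * Real.exp (-(n : ℝ))) := by
      rw [show Real.exp (Cp + ((n : ℝ) + 1) + 1)
            * (2 ^ (N + 1) * r ^ (N + 2) * Real.exp (-(2 * ((n : ℝ) + 1))))
          = 2 ^ (N + 1) * r ^ (N + 2) * (Real.exp (Cp + ((n : ℝ) + 1) + 1)
            * Real.exp (-(2 * ((n : ℝ) + 1)))) from by ring,
        ← Real.exp_add,
        show Cp + ((n : ℝ) + 1) + 1 + -(2 * ((n : ℝ) + 1)) = Cp + -(n : ℝ) from by ring,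
        Real.exp_add]
      ring
    have hexpn : ENNReal.ofReal (Real.exp (-(n : ℝ))) ≤ (2⁻¹ : ℝ≥0∞) ^ n := by
      have hr1 : Real.exp (-(n : ℝ)) ≤ (1 / 2 : ℝ) ^ n := by
        have h3 : Real.exp (-(n : ℝ)) = (Real.exp (-1)) ^ n := by
          rw [← Real.exp_nat_mul]
          congr 1
          ring
        have h4 : Real.exp (-1) ≤ 1 / 2 := by
          rw [Real.exp_neg]
          have h5 : (2 : ℝ) ≤ Real.exp 1 := by
            nlinarith [Real.add_one_le_exp (1 : ℝ)]
          have h6 := Real.exp_pos 1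
          have h7 : (Real.exp 1)⁻¹ * Real.exp 1 = 1 := inv_mul_cancel₀ h6.ne'
          nlinarith [inv_nonneg.mpr h6.le]
        rw [h3]
        exact pow_le_pow_left₀ (Real.exp_pos _).le h4 n
      calc ENNReal.ofReal (Real.exp (-(n : ℝ))) ≤ ENNReal.ofReal ((1 / 2 : ℝ) ^ n) :=
            ENNReal.ofReal_le_ofReal hr1
        _ = (2⁻¹ : ℝ≥0∞) ^ n := by
            rw [ENNReal.ofReal_pow (by norm_num)]
            congr 1
            rw [one_div, ENNReal.ofReal_inv_of_pos (by norm_num)]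
            norm_num
    calc ENNReal.ofReal (Real.exp (Cp + ((n : ℝ) + 1) + 1)) * (volume.restrict Q) (A n)
        ≤ ENNReal.ofReal (Real.exp (Cp + ((n : ℝ) + 1) + 1))
            * (ExpRiesz.vB N * ENNReal.ofReal (2 ^ (N + 1) * r ^ (N + 2)
              * Real.exp (-(2 * ((n : ℝ) + 1))))) :=
          mul_le_mul_right (h1.trans h2) _
      _ = ExpRiesz.vB N * (ENNReal.ofReal (Real.exp (Cp + ((n : ℝ) + 1) + 1))
            * ENNReal.ofReal (2 ^ (N + 1) * r ^ (N + 2) * Real.exp (-(2 * ((n : ℝ) + 1))))) := by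
          ring
      _ = ExpRiesz.vB N * ENNReal.ofReal (2 * r ^ (N + 2)
            * (2 ^ N * Real.exp Cp * Real.exp (-(n : ℝ)))) := by
          rw [← ENNReal.ofReal_mul (by positivity), hreal2]
      _ = ExpRiesz.vB N * (ENNReal.ofReal (2 * r ^ (N + 2))
            * (ENNReal.ofReal (2 ^ N * Real.exp Cp) * ENNReal.ofReal (Real.exp (-(n : ℝ))))) := by
          rw [ENNReal.ofReal_mul (p := 2 * r ^ (N + 2)) (by positivity),
            ENNReal.ofReal_mul (p := 2 ^ N * Real.exp Cp) (by positivity)]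
      _ = (volume Q * ENNReal.ofReal (2 ^ N * Real.exp Cp))
            * ENNReal.ofReal (Real.exp (-(n : ℝ))) := by
          rw [hvolQ]
          ring
      _ ≤ (volume Q * ENNReal.ofReal (2 ^ N * Real.exp Cp)) * (2⁻¹ : ℝ≥0∞) ^ n :=
          mul_le_mul_right hexpn _
  have hQfin : volume Q ≠ ⊤ := by
    rw [hvolQ]
    exact ENNReal.mul_ne_top ExpRiesz.vB_ne_top ENNReal.ofReal_ne_top
  calc ∫⁻ w in Q, expE (ENNReal.ofReal 1 * riesz N R ν w)
      ≤ ∫⁻ w in Q, g w := lintegral_mono hpt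
    _ = ENNReal.ofReal (Real.exp (Cp + 1)) * volume Q
        + ∑' n : ℕ, ENNReal.ofReal (Real.exp (Cp + ((n : ℝ) + 1) + 1))
            * (volume.restrict Q) (A n) := hsum
    _ ≤ ENNReal.ofReal (Real.exp (Cp + 1)) * volume Q
        + ∑' n : ℕ, (volume Q * ENNReal.ofReal (2 ^ N * Real.exp Cp)) * (2⁻¹ : ℝ≥0∞) ^ n :=
        add_le_add_right (ENNReal.tsum_le_tsum hterm2) _
    _ = ENNReal.ofReal (Real.exp (Cp + 1)) * volume Q
        + (volume Q * ENNReal.ofReal (2 ^ N * Real.exp Cp)) * 2 := by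
        rw [ENNReal.tsum_mul_left, ENNReal.tsum_geometric, ENNReal.one_sub_inv_two, inv_inv]
    _ = (ENNReal.ofReal (Real.exp (Cp + 1)) + ENNReal.ofReal (2 ^ N * Real.exp Cp) * 2)
          * volume Q := by ring
    _ ≤ ENNReal.ofReal (Real.exp (Cp + 1) * (1 + 2 ^ (N + 1))) * volume Q := by
        apply mul_le_mul_left
        have h6 : ENNReal.ofReal (2 ^ N * Real.exp Cp) * 2
            = ENNReal.ofReal (2 ^ (N + 1) * Real.exp Cp) := by
          rw [show (2 : ℝ≥0∞) = ENNReal.ofReal 2 from by norm_num,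
            ← ENNReal.ofReal_mul (by positivity)]
          congr 1
          ring
        rw [h6, ← ENNReal.ofReal_add (by positivity) (by positivity)]
        apply ENNReal.ofReal_le_ofReal
        have h7 : Real.exp Cp ≤ Real.exp (Cp + 1) := Real.exp_le_exp.mpr (by linarith)
        nlinarith [Real.exp_pos (Cp + 1), pow_pos (zero_lt_two (α := ℝ)) (N + 1)]
end

section
/- Let N ≥ 2 and R > 0. There exists a constant C₂ = C₂(N) > 0 such that for every nonnegative bounded Radon measure μ on ℝ^{N+1} supported in Q̃_R(0,0), for every (x,t) ∈ Q̃_R(0,0) and every ρ > 0 with B_ρ(x) ⊂ B_R(0), one has (ℍ * μ)(x,t) ≥ C₂ Σ_{k=0}^∞ μ( Q_{ρ_k/8}(x, t − (35/128)ρ_k²) ) ρ_k^{−N}, where ρ_k = 4^{−k} ρ. -/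
open MeasureTheory Metric Set
open scoped ENNReal NNReal

lemma aux_rpow_sq (N : ℕ) {r : ℝ} (hr : 0 < r) :
    (r ^ 2 : ℝ) ^ (-(N : ℝ) / 2) = (r ^ N)⁻¹ := by
  rw [← Real.rpow_natCast r 2, ← Real.rpow_mul hr.le]
  rw [show ((2 : ℕ) : ℝ) * (-(N : ℝ) / 2) = -(N : ℝ) by push_cast; ring]
  rw [Real.rpow_neg hr.le, Real.rpow_natCast]

lemma aux_heatK_lb (N : ℕ) {r τ d : ℝ} (hr : 0 < r)
    (hτ1 : 35 / 128 * r ^ 2 ≤ τ) (hτ2 : τ < 37 / 128 * r ^ 2)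
    (hd : 0 ≤ d) (hd2 : d < r / 8) :
    (37 * Real.pi / 32) ^ (-(N : ℝ) / 2) * Real.exp (-(1 / 70)) / r ^ N ≤
      (4 * Real.pi * τ) ^ (-(N : ℝ) / 2) * Real.exp (-d ^ 2 / (4 * τ)) := by
  have hπ := Real.pi_pos
  have hτpos : 0 < τ := lt_of_lt_of_le (by positivity) hτ1
  have h1 : ((37 * Real.pi / 32) * r ^ 2) ^ (-(N : ℝ) / 2)
      = (37 * Real.pi / 32) ^ (-(N : ℝ) / 2) / r ^ N := by
    rw [Real.mul_rpow (by positivity) (by positivity), aux_rpow_sq N hr,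
      div_eq_mul_inv]
    ring
  have e1 : ((37 * Real.pi / 32) * r ^ 2) ^ (-(N : ℝ) / 2)
      ≤ (4 * Real.pi * τ) ^ (-(N : ℝ) / 2) := by
    apply Real.rpow_le_rpow_of_nonpos (by positivity) (by nlinarith) (by rw [neg_div]; exact neg_nonpos.mpr (by positivity))
  have e2 : Real.exp (-(1 / 70)) ≤ Real.exp (-d ^ 2 / (4 * τ)) := by
    apply Real.exp_le_exp.mpr
    rw [neg_div, neg_le_neg_iff, div_le_div_iff₀ (by positivity) (by norm_num : (0:ℝ) < 70)]
    nlinarith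
  calc (37 * Real.pi / 32) ^ (-(N : ℝ) / 2) * Real.exp (-(1 / 70)) / r ^ N
      = ((37 * Real.pi / 32) * r ^ 2) ^ (-(N : ℝ) / 2) * Real.exp (-(1 / 70)) := by
        rw [h1]; ring
    _ ≤ (4 * Real.pi * τ) ^ (-(N : ℝ) / 2) * Real.exp (-d ^ 2 / (4 * τ)) :=
        mul_le_mul e1 e2 (Real.exp_pos _).le (Real.rpow_nonneg (by positivity) _)

/-- Lower bound of the heat potential by a dyadic sum:
`(ℍ * μ)(x,t) ≥ C₂(N) Σ_k μ(Q_{ρ_k/8}(x, t - (35/128)ρ_k²)) ρ_k^{-N}` with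
`ρ_k = 4^{-k} ρ`, for `(x,t) ∈ Q̃_R(0,0)` and `B_ρ(x) ⊆ B_R(0)`. -/
theorem heat_potential_ge_dyadic_sum (N : ℕ) (hN : 2 ≤ N) :
    ∃ C₂ > (0 : ℝ), ∀ R > (0 : ℝ), ∀ μ : Measure (PSpace N), IsFiniteMeasure μ →
      μ (pQt N R 0)ᶜ = 0 →
      ∀ z ∈ pQt N R 0, ∀ ρ > (0 : ℝ),
        ball z.1 ρ ⊆ ball (0 : EuclideanSpace ℝ (Fin N)) R →
        ENNReal.ofReal C₂ *
            ∑' k : ℕ, μ (pQ N (ρ / 4 ^ k / 8) (z.1, z.2 - 35 / 128 * (ρ / 4 ^ k) ^ 2)) /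
              ENNReal.ofReal ((ρ / 4 ^ k) ^ N)
          ≤ heatPot N μ z := by
  have hπ := Real.pi_pos
  refine ⟨(37 * Real.pi / 32) ^ (-(N : ℝ) / 2) * Real.exp (-(1 / 70)), by positivity, ?_⟩
  set C₂ : ℝ := (37 * Real.pi / 32) ^ (-(N : ℝ) / 2) * Real.exp (-(1 / 70)) with hC₂
  have hC₂pos : 0 < C₂ := by positivity
  intro R hR μ hfin hsupp z hz ρ hρ hball
  set f : PSpace N → ℝ≥0∞ := fun w => ENNReal.ofReal (heatK N (z.1 - w.1, z.2 - w.2))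
    with hf
  set Q : ℕ → Set (PSpace N) :=
    fun k => pQ N (ρ / 4 ^ k / 8) (z.1, z.2 - 35 / 128 * (ρ / 4 ^ k) ^ 2) with hQ
  have hρk : ∀ k : ℕ, (0 : ℝ) < ρ / 4 ^ k := fun k => by positivity
  have hQm : ∀ k, MeasurableSet (Q k) :=
    fun k => measurableSet_ball.prod measurableSet_Ioc
  -- disjointness
  have hdisj : Pairwise (Function.onFun Disjoint Q) := by
    have key : ∀ k l, k < l → Disjoint (Q k) (Q l) := by
      intro k l hkl
      rw [Set.disjoint_left]
      rintro ⟨y, s⟩ hk hl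
      simp only [hQ, pQ, Set.mem_prod, Set.mem_Ioc, mem_ball] at hk hl
      have h1 : s ≤ z.2 - 35 / 128 * (ρ / 4 ^ k) ^ 2 := hk.2.2
      have h2 : z.2 - 35 / 128 * (ρ / 4 ^ l) ^ 2 - (ρ / 4 ^ l / 8) ^ 2 < s := hl.2.1
      have hle : ρ / 4 ^ l ≤ ρ / 4 ^ k / 4 := by
        rw [div_div, ← pow_succ]
        apply div_le_div_of_nonneg_left hρ.le (by positivity)
        exact pow_le_pow_right₀ (by norm_num) hkl
      have h3 : (ρ / 4 ^ l) ^ 2 ≤ (ρ / 4 ^ k / 4) ^ 2 :=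
        pow_le_pow_left₀ (hρk l).le hle 2
      nlinarith [hρk k, sq_nonneg (ρ / 4 ^ k)]
    intro k l hkl
    rcases lt_or_gt_of_ne hkl with h | h
    · exact key k l h
    · exact (key l k h).symm
  -- pointwise / per-cylinder bound
  have key : ∀ k : ℕ, ENNReal.ofReal C₂ *
      (μ (Q k) / ENNReal.ofReal ((ρ / 4 ^ k) ^ N)) ≤ ∫⁻ w in Q k, f w ∂μ := by
    intro k
    set r : ℝ := ρ / 4 ^ k with hr
    have hrpos : 0 < r := hρk k
    have hrN : 0 < r ^ N := pow_pos hrpos N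
    have hpt : ∀ w ∈ Q k, ENNReal.ofReal (C₂ / r ^ N) ≤ f w := by
      rintro ⟨y, s⟩ hw
      simp only [hQ, pQ, Set.mem_prod, Set.mem_Ioc, mem_ball] at hw
      obtain ⟨hy, hs1, hs2⟩ := hw
      have hτ1 : 35 / 128 * r ^ 2 ≤ z.2 - s := by linarith
      have hτ2 : z.2 - s < 37 / 128 * r ^ 2 := by nlinarith [hs1]
      have hτpos : 0 < z.2 - s := lt_of_lt_of_le (by positivity) hτ1
      have hd : ‖z.1 - y‖ < r / 8 := by
        rw [← dist_eq_norm, dist_comm]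
        exact hy
      have hkval : heatK N (z.1 - y, z.2 - s)
          = (4 * Real.pi * (z.2 - s)) ^ (-(N : ℝ) / 2) *
            Real.exp (-‖z.1 - y‖ ^ 2 / (4 * (z.2 - s))) := by
        simp only [heatK, if_pos hτpos]
      apply ENNReal.ofReal_le_ofReal
      show C₂ / r ^ N ≤ heatK N (z.1 - y, z.2 - s)
      rw [hkval, hC₂]
      exact aux_heatK_lb N hrpos hτ1 hτ2 (norm_nonneg _) hd
    calc ENNReal.ofReal C₂ * (μ (Q k) / ENNReal.ofReal (r ^ N))
        = ENNReal.ofReal (C₂ / r ^ N) * μ (Q k) := by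
          rw [ENNReal.ofReal_div_of_pos hrN, div_eq_mul_inv, div_eq_mul_inv,
            mul_comm (μ (Q k)), mul_assoc]
      _ = ∫⁻ _ in Q k, ENNReal.ofReal (C₂ / r ^ N) ∂μ := (setLIntegral_const _ _).symm
      _ ≤ ∫⁻ w in Q k, f w ∂μ := setLIntegral_mono' (hQm k) hpt
  calc ENNReal.ofReal C₂ *
        ∑' k : ℕ, μ (Q k) / ENNReal.ofReal ((ρ / 4 ^ k) ^ N)
      = ∑' k : ℕ, ENNReal.ofReal C₂ * (μ (Q k) / ENNReal.ofReal ((ρ / 4 ^ k) ^ N)) :=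
        ENNReal.tsum_mul_left.symm
    _ ≤ ∑' k : ℕ, ∫⁻ w in Q k, f w ∂μ := ENNReal.tsum_le_tsum key
    _ = ∫⁻ w in ⋃ k, Q k, f w ∂μ := (lintegral_iUnion hQm hdisj f).symm
    _ ≤ ∫⁻ w, f w ∂μ := setLIntegral_le_lintegral _ _
    _ = heatPot N μ z := rfl
end
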